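/- Let Y : ℝⁿ → ℝⁿ be a continuous map that is a local homeomorphism, and suppose Y is proper at a point p₀ (there exists a neighborhood U of p₀ with Y⁻¹(closure U) compact). Then the fiber-counting function h(p) = #Y⁻¹(p) is finite and locally constant at p₀. -/

import Mathlib

/-- If a local homeomorphism `Y : ℝⁿ → ℝⁿ` is proper at `p₀` (some neighborhood `U`
of `p₀` has `Y ⁻¹' (closure U)` compact), then its fiber-counting function is finite
and locally constant at `p₀`. -/
theorem stmt12 {n : ℕ} (Y : (Fin n → ℝ) → (Fin n → ℝ)) (hloc : IsLocalHomeomorph Y)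
    (p₀ : Fin n → ℝ) (hprop : ∃ U ∈ nhds p₀, IsCompact (Y ⁻¹' closure U)) :
    (Y ⁻¹' {p₀}).Finite ∧
      ∃ V ∈ nhds p₀, ∀ p ∈ V, (Y ⁻¹' {p}).Finite ∧
        (Y ⁻¹' {p}).ncard = (Y ⁻¹' {p₀}).ncard := by
  classical
  obtain ⟨U, hU, hK⟩ := hprop
  have hYc : Continuous Y := hloc.continuous
  have hYo : IsOpenMap Y := hloc.isOpenMap
  choose e hes heq using hloc
  have hinj : ∀ x, Set.InjOn Y (e x).source := fun x => by
    rw [heq x]; exact (e x).injOn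
  set F := Y ⁻¹' {p₀} with hFdef
  have hFsub : F ⊆ Y ⁻¹' closure U := by
    intro q hq
    simp only [hFdef, Set.mem_preimage, Set.mem_singleton_iff] at hq
    simp only [Set.mem_preimage, hq]
    exact subset_closure (mem_of_mem_nhds hU)
  have hFcpt : IsCompact F := hK.of_isClosed_subset (isClosed_singleton.preimage hYc) hFsub
  -- finiteness of the fiber
  have hFfin : F.Finite := by
    obtain ⟨t, ht⟩ := hFcpt.elim_finite_subcover (fun x => (e x).source)
      (fun x => (e x).open_source) (fun q hq => Set.mem_iUnion.mpr ⟨q, hes q⟩)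
    have : F ⊆ ⋃ x ∈ t, F ∩ (e x).source := by
      intro q hq
      obtain ⟨x, hx, hq'⟩ := Set.mem_iUnion₂.mp (ht hq)
      exact Set.mem_iUnion₂.mpr ⟨x, hx, hq, hq'⟩
    refine Set.Finite.subset (Set.Finite.biUnion t.finite_toSet fun x _ => ?_) this
    refine Set.Subsingleton.finite fun a ha b hb => ?_
    have : Y a = Y b := by
      have ha' : Y a = p₀ := ha.1
      have hb' : Y b = p₀ := hb.1
      rw [ha', hb']
    exact hinj x ha.2 hb.2 this
  refine ⟨hFfin, ?_⟩
  -- disjoint neighborhoods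
  set ε : (Fin n → ℝ) → ℝ := fun x =>
    if h : (F \ {x}).Nonempty then Metric.infDist x (F \ {x}) / 2 else 1 with hεdef
  have hεpos : ∀ x ∈ F, 0 < ε x := by
    intro x hx
    by_cases h : (F \ {x}).Nonempty
    · have hcl : IsClosed (F \ {x}) := (hFfin.diff).isClosed
      have hxnot : x ∉ F \ {x} := fun hc => hc.2 rfl
      have := (hcl.notMem_iff_infDist_pos h).mp hxnot
      simp only [hεdef, dif_pos h]
      linarith
    · simp [hεdef, h]
  have hεle : ∀ x ∈ F, ∀ y ∈ F, x ≠ y → ε x ≤ dist x y / 2 := by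
    intro x hx y hy hxy
    have hy' : y ∈ F \ {x} := ⟨hy, fun hc => hxy (hc.symm)⟩
    have h : (F \ {x}).Nonempty := ⟨y, hy'⟩
    simp only [hεdef, dif_pos h]
    have := Metric.infDist_le_dist_of_mem (x := x) hy'
    linarith
  set W : (Fin n → ℝ) → Set (Fin n → ℝ) := fun x => (e x).source ∩ Metric.ball x (ε x)
    with hWdef
  have hWopen : ∀ x, IsOpen (W x) := fun x => (e x).open_source.inter Metric.isOpen_ball
  have hWmem : ∀ x ∈ F, x ∈ W x := fun x hx => ⟨hes x, Metric.mem_ball_self (hεpos x hx)⟩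
  have hWinj : ∀ x, Set.InjOn Y (W x) := fun x => (hinj x).mono Set.inter_subset_left
  have hWdisj : ∀ x ∈ F, ∀ y ∈ F, x ≠ y → Disjoint (W x) (W y) := by
    intro x hx y hy hxy
    rw [Set.disjoint_left]
    rintro z ⟨-, hzx⟩ ⟨-, hzy⟩
    have h1 : dist z x < ε x := hzx
    have h2 : dist z y < ε y := hzy
    have h3 := hεle x hx y hy hxy
    have h4 := hεle y hy x hx hxy.symm
    have h5 : dist x y ≤ dist z x + dist z y := by
      rw [dist_comm z x]; exact dist_triangle x z y
    rw [dist_comm y x] at h4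
    linarith
  set s := hFfin.toFinset with hsdef
  have hsmem : ∀ x, x ∈ s ↔ x ∈ F := fun x => hFfin.mem_toFinset
  set Wu := ⋃ x ∈ s, W x with hWudef
  have hWuopen : IsOpen Wu := isOpen_biUnion fun x _ => hWopen x
  have hFWu : F ⊆ Wu := fun x hx =>
    Set.mem_biUnion ((hsmem x).mpr hx) (hWmem x hx)
  set C := Y ⁻¹' closure U \ Wu with hCdef
  have hCcpt : IsCompact C := hK.diff hWuopen
  have hYCclosed : IsClosed (Y '' C) := (hCcpt.image hYc).isClosed
  have hp₀notin : p₀ ∉ Y '' C := by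
    rintro ⟨q, hqC, hq⟩
    exact hqC.2 (hFWu (by simp [hFdef, hq]))
  set V := interior U ∩ (Y '' C)ᶜ ∩ ⋂ x ∈ s, Y '' (W x) with hVdef
  have hVopen : IsOpen V :=
    ((isOpen_interior.inter hYCclosed.isOpen_compl).inter
      (Set.Finite.isOpen_biInter s.finite_toSet fun x _ => hYo _ (hWopen x)))
  have hp₀V : p₀ ∈ V := by
    refine ⟨⟨mem_interior_iff_mem_nhds.mpr hU, hp₀notin⟩, ?_⟩
    refine Set.mem_biInter fun x hx => ?_
    have hxF : x ∈ F := (hsmem x).mp hx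
    exact ⟨x, hWmem x hxF, hxF⟩
  refine ⟨V, hVopen.mem_nhds hp₀V, fun p hp => ?_⟩
  obtain ⟨⟨hpU, hpC⟩, hpW⟩ := hp
  -- fiber of p is contained in Wu
  have hfibWu : Y ⁻¹' {p} ⊆ Wu := by
    intro q hq
    simp only [Set.mem_preimage, Set.mem_singleton_iff] at hq
    by_contra hqWu
    exact hpC ⟨q, ⟨by simp [Set.mem_preimage, hq]; exact interior_subset.trans subset_closure hpU, hqWu⟩, hq⟩
  -- for each x in s, the unique preimage of p in W x
  have hex : ∀ x ∈ F, ∃ q ∈ W x, Y q = p := by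
    intro x hx
    have hxs : x ∈ s := (hsmem x).mpr hx
    have := Set.mem_iInter₂.mp hpW x hxs
    obtain ⟨q, hq, hq'⟩ := this
    exact ⟨q, hq, hq'⟩
  -- choose the unique preimage
  choose! g hg1 hg2 using hex
  have hgF : Set.BijOn g F (Y ⁻¹' {p}) := by
    refine ⟨fun x hx => by simp [Set.mem_preimage, hg2 x hx], ?_, ?_⟩
    · intro x hx y hy hxy
      by_contra hne
      exact (Set.disjoint_left.mp (hWdisj x hx y hy hne)) (hg1 x hx) (hxy ▸ hg1 y hy)
    · intro q hq
      have hq' : Y q = p := hq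
      obtain ⟨x, hxs, hqW⟩ := Set.mem_iUnion₂.mp (hfibWu hq)
      have hxF : x ∈ F := (hsmem x).mp hxs
      refine ⟨x, hxF, ?_⟩
      exact (hWinj x (hg1 x hxF) hqW (by rw [hg2 x hxF, hq']))
  have himg : Y ⁻¹' {p} = g '' F := (hgF.image_eq).symm
  constructor
  · rw [himg]; exact hFfin.image g
  · rw [himg, Set.ncard_image_of_injOn hgF.injOn]
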